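/- The maximum size of an independent set in the circulant graph C_13(1,3) is 5. -/

import Mathlib

/-- The circulant graph `C_n(1,3)`: vertices are `ZMod n`, and `i` is adjacent to `j`
iff `i - j ≡ ±1` or `±3 (mod n)`. -/
def circulantGraph (n : ℕ) : SimpleGraph (ZMod n) :=
  SimpleGraph.fromRel (fun i j => j - i = 1 ∨ j - i = 3)

/-- `vc` (on vertices) and `ec` (on edges) form a total `k`-colouring of `G`:
adjacent vertices get distinct colours, adjacent (distinct, incident) edges get distinct
colours, and each vertex gets a colour distinct from those of its incident edges. -/
def IsTotalColoring {V : Type*} (G : SimpleGraph V) (k : ℕ)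
    (vc : V → Fin k) (ec : Sym2 V → Fin k) : Prop :=
  (∀ v w : V, G.Adj v w → vc v ≠ vc w) ∧
  (∀ e₁ ∈ G.edgeSet, ∀ e₂ ∈ G.edgeSet, e₁ ≠ e₂ → (∃ v, v ∈ e₁ ∧ v ∈ e₂) → ec e₁ ≠ ec e₂) ∧
  (∀ v : V, ∀ e ∈ G.edgeSet, v ∈ e → vc v ≠ ec e)

/-- `G` has a total `k`-colouring. -/
def HasTotalColoring {V : Type*} (G : SimpleGraph V) (k : ℕ) : Prop :=
  ∃ vc ec, IsTotalColoring G k vc ec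

/-- The total chromatic number of `G`: the least `k` admitting a total `k`-colouring. -/
noncomputable def totalChromaticNumber {V : Type*} (G : SimpleGraph V) : ℕ :=
  sInf {k : ℕ | HasTotalColoring G k}

instance : DecidableRel (circulantGraph 13).Adj := fun a b =>
  decidable_of_iff (a ≠ b ∧ ((b - a = 1 ∨ b - a = 3) ∨ (a - b = 1 ∨ a - b = 3))) Iff.rfl

lemma adj_iff (v w : ZMod 13) : (circulantGraph 13).Adj v w ↔
    v ≠ w ∧ ((w - v = 1 ∨ w - v = 3) ∨ (v - w = 1 ∨ v - w = 3)) := Iff.rfl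

lemma adj_add_one (x : ZMod 13) : (circulantGraph 13).Adj x (x + 1) := by
  rw [adj_iff]
  refine ⟨fun h => ?_, Or.inl (Or.inl (by ring))⟩
  have h0 : (1 : ZMod 13) = 0 := by linear_combination -h
  exact absurd h0 (by decide)

lemma adj_sub_one (x : ZMod 13) : (circulantGraph 13).Adj x (x - 1) := by
  rw [adj_iff]
  refine ⟨fun h => ?_, Or.inr (Or.inl (by ring))⟩
  have h0 : (1 : ZMod 13) = 0 := by linear_combination h
  exact absurd h0 (by decide)

lemma adj_add_ten (x : ZMod 13) : (circulantGraph 13).Adj x (x + 10) := by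
  rw [adj_iff]
  refine ⟨fun h => ?_, Or.inr (Or.inr ?_)⟩
  · have h0 : (10 : ZMod 13) = 0 := by linear_combination -h
    exact absurd h0 (by decide)
  · have h3 : (3 : ZMod 13) = -10 := by decide
    rw [h3]; ring

lemma indep_card_le (s : Finset (ZMod 13))
    (h : ∀ v ∈ s, ∀ w ∈ s, ¬ (circulantGraph 13).Adj v w) : s.card ≤ 5 := by
  have h13 : (13 : ZMod 13) = 0 := by decide
  have h1 : ∀ x ∈ s, x + 1 ∉ s := fun x hx hx1 => h x hx (x + 1) hx1 (adj_add_one x)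
  have hm1 : ∀ x ∈ s, x - 1 ∉ s := fun x hx hx1 => h x hx (x - 1) hx1 (adj_sub_one x)
  -- basic bound: s.card ≤ 6
  have hcompl : s.card ≤ sᶜ.card := by
    refine Finset.card_le_card_of_injOn (· + 1)
      (fun x hx => Finset.mem_compl.mpr (h1 x hx)) ?_
    intro a _ b _ hab
    simpa using hab
  have hcc : sᶜ.card = 13 - s.card := by
    rw [Finset.card_compl, ZMod.card]
  have hc6 : s.card ≤ 6 := by omega
  by_contra hgt
  push_neg at hgt
  have hc : s.card = 6 := by omega
  -- the sets s+1 and s-1 sit inside the 7-element complement, so they overlap a lot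
  have hA : s.image (· + 1) ⊆ sᶜ := by
    intro y hy
    obtain ⟨x, hx, rfl⟩ := Finset.mem_image.mp hy
    exact Finset.mem_compl.mpr (h1 x hx)
  have hB : s.image (· - 1) ⊆ sᶜ := by
    intro y hy
    obtain ⟨x, hx, rfl⟩ := Finset.mem_image.mp hy
    exact Finset.mem_compl.mpr (hm1 x hx)
  have hAc : (s.image (· + 1)).card = 6 := by
    rw [Finset.card_image_of_injective _ (add_left_injective 1), hc]
  have hBc : (s.image (· - 1)).card = 6 := by
    rw [Finset.card_image_of_injective _ (sub_left_injective), hc]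
  have hU : (s.image (· + 1) ∪ s.image (· - 1)).card ≤ 7 := by
    have := Finset.card_le_card (Finset.union_subset hA hB)
    omega
  have hIc : 5 ≤ (s.image (· + 1) ∩ s.image (· - 1)).card := by
    have := Finset.card_union_add_card_inter (s.image (· + 1)) (s.image (· - 1))
    omega
  -- hence at least 5 elements x of s have x + 2 ∈ s
  have hF : 5 ≤ (s.filter (fun x => x + 2 ∈ s)).card := by
    refine le_trans hIc (Finset.card_le_card_of_injOn (· - 1) ?_ ?_)
    · intro y hy
      obtain ⟨hy1, hy2⟩ := Finset.mem_inter.mp hy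
      obtain ⟨x, hx, hxe⟩ := Finset.mem_image.mp hy1
      obtain ⟨z, hz, hze⟩ := Finset.mem_image.mp hy2
      refine Finset.mem_filter.mpr ⟨?_, ?_⟩
      · show y - 1 ∈ s
        have : y - 1 = x := by rw [← hxe]; ring
        rwa [this]
      · show y - 1 + 2 ∈ s
        have : y - 1 + 2 = z := by rw [← hze]; ring
        rwa [this]
    · intro a _ b _ hab
      simpa using hab
  -- hence at least 5 elements have a predecessor, so at most one lacks one
  have hG5 : 5 ≤ (s.filter (fun x => x - 2 ∈ s)).card := by
    refine le_trans hF (Finset.card_le_card_of_injOn (· + 2) ?_ ?_)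
    · intro x hx
      obtain ⟨hx1, hx2⟩ := Finset.mem_filter.mp hx
      refine Finset.mem_filter.mpr ⟨hx2, ?_⟩
      show x + 2 - 2 ∈ s
      have : x + 2 - 2 = x := by ring
      rwa [this]
    · intro a _ b _ hab
      simpa using hab
  have hGle : (s.filter (fun x => x - 2 ∉ s)).card ≤ 1 := by
    have h' : (s.filter (fun x => x - 2 ∈ s)).card + (s.filter (fun x => x - 2 ∉ s)).card = s.card :=
      Finset.card_filter_add_card_filter_not
      (s := s) (p := fun x => x - 2 ∈ s)
    omega
  -- choose b ∈ s such that every other element of s has its predecessor in s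
  obtain ⟨b, hb, hbp⟩ : ∃ b ∈ s, ∀ x ∈ s, x ≠ b → x - 2 ∈ s := by
    rcases Finset.eq_empty_or_nonempty (s.filter (fun x => x - 2 ∉ s)) with hGe | ⟨b, hbG⟩
    · obtain ⟨b, hb⟩ : s.Nonempty := Finset.card_pos.mp (by omega)
      refine ⟨b, hb, fun x hx _ => ?_⟩
      by_contra hx2
      exact (Finset.eq_empty_iff_forall_notMem.mp hGe x) (Finset.mem_filter.mpr ⟨hx, hx2⟩)
    · have hbs := (Finset.mem_filter.mp hbG).1
      refine ⟨b, hbs, fun x hx hne => ?_⟩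
      by_contra hx2
      exact hne (Finset.card_le_one.mp hGle x (Finset.mem_filter.mpr ⟨hx, hx2⟩) b hbG)
  -- the chain lemma: walking back from any element of s reaches b, all in s
  have key : ∀ n : ℕ, ∀ x ∈ s, (7 * (x - b) : ZMod 13).val = n →
      ∀ m : ℕ, m ≤ n → b + 2 * (m : ZMod 13) ∈ s := by
    intro n
    induction n using Nat.strong_induction_on with
    | _ n ih =>
      intro x hx hxn m hm
      rcases Nat.eq_zero_or_pos n with rfl | hn
      · have hm0 : m = 0 := by omega
        subst hm0
        have h0 : (7 * (x - b) : ZMod 13) = 0 := (ZMod.val_eq_zero _).mp hxn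
        have hxb : x = b := by
          have h27 : (2 : ZMod 13) * 7 = 1 := by decide
          have : (x - b : ZMod 13) = 0 := by
            calc (x - b : ZMod 13) = (2 * 7) * (x - b) := by rw [h27]; ring
            _ = 2 * (7 * (x - b)) := by ring
            _ = 0 := by rw [h0]; ring
          have := sub_eq_zero.mp this
          exact this
        simpa using hb
      · obtain ⟨k, rfl⟩ : ∃ k, n = k + 1 := ⟨n - 1, by omega⟩
        have hxb : x ≠ b := by
          intro hxe
          rw [hxe, sub_self, mul_zero, ZMod.val_zero] at hxn
          omega
        have hx2 : x - 2 ∈ s := hbp x hx hxb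
        have hy : (7 * (x - b) : ZMod 13) = ((k + 1 : ℕ) : ZMod 13) := by
          rw [← hxn]
          exact (ZMod.natCast_rightInverse _).symm
        have hklt : k + 1 < 13 := by rw [← hxn]; exact ZMod.val_lt _
        have hstep : (7 * ((x - 2) - b) : ZMod 13).val = k := by
          have heq : (7 * ((x - 2) - b) : ZMod 13) = ((k : ℕ) : ZMod 13) := by
            push_cast at hy ⊢
            linear_combination hy - h13
          rw [heq]
          exact ZMod.val_cast_of_lt (by omega)
        rcases Nat.lt_or_ge m (k + 1) with hmk | hmk
        · exact ih k (by omega) (x - 2) hx2 hstep m (by omega)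
        · have hm' : m = k + 1 := by omega
          subst hm'
          have hxe : x = b + 2 * ((k + 1 : ℕ) : ZMod 13) := by
            push_cast at hy ⊢
            linear_combination 2 * hy - (x - b) * h13
          rwa [← hxe]
  -- pigeonhole: some element is at distance ≥ 5 from b
  have hinj : Set.InjOn (fun x => (7 * (x - b) : ZMod 13).val) s := by
    intro x _ y _ hxy
    have h7 : (7 * (x - b) : ZMod 13) = 7 * (y - b) := ZMod.val_injective 13 hxy
    have h27 : (2 : ZMod 13) * 7 = 1 := by decide
    have : (x : ZMod 13) - b = y - b := by
      calc (x : ZMod 13) - b = (2 * 7) * (x - b) := by rw [h27]; ring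
      _ = 2 * (7 * (x - b)) := by ring
      _ = 2 * (7 * (y - b)) := by rw [h7]
      _ = (2 * 7) * (y - b) := by ring
      _ = y - b := by rw [h27]; ring
    have := sub_left_injective this
    exact this
  obtain ⟨x, hxs, hx5⟩ : ∃ x ∈ s, 5 ≤ (7 * (x - b) : ZMod 13).val := by
    by_contra hno
    push_neg at hno
    have hsub : s.image (fun x => (7 * (x - b) : ZMod 13).val) ⊆ Finset.range 5 := by
      intro y hy
      obtain ⟨x, hx, rfl⟩ := Finset.mem_image.mp hy
      exact Finset.mem_range.mpr (hno x hx)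
    have h6 : (s.image (fun x => (7 * (x - b) : ZMod 13).val)).card = 6 := by
      rw [Finset.card_image_of_injOn hinj, hc]
    have := Finset.card_le_card hsub
    rw [h6, Finset.card_range] at this
    omega
  have hb10 : b + 10 ∈ s := by
    have := key _ x hxs rfl 5 hx5
    have h510 : (2 : ZMod 13) * ((5 : ℕ) : ZMod 13) = 10 := by decide
    rwa [h510] at this
  exact h b hb (b + 10) hb10 (adj_add_ten b)

theorem circulant_13_max_independent_set :
    IsGreatest {k : ℕ | ∃ s : Finset (ZMod 13),
      (∀ v ∈ s, ∀ w ∈ s, ¬ (circulantGraph 13).Adj v w) ∧ s.card = k} 5 := by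
  constructor
  · refine ⟨({0, 2, 7, 9, 11} : Finset (ZMod 13)), ?_, by decide⟩
    decide
  · rintro k ⟨s, hs, rfl⟩
    exact indep_card_le s hs
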